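/- Let Γ ⊆ X be compact and non-recurrent, let Λ ⊆ ℂ, and let G be a set of continuous functions Γ → ℂ whose linear span is dense in C(Γ;ℂ) with respect to the supremum norm. If the linear span of the set of eigenfunctions generated by pairs (λ, g) with λ ∈ Λ and g ∈ C(Γ;ℂ) is dense in C(X_T;ℂ) in the supremum norm, then the linear span of the set of eigenfunctions generated by pairs (λ, g) with λ ∈ Λ and g ∈ G is also dense in C(X_T;ℂ). -/

import Mathlib

/-- A set `Γ` is non-recurrent (for the flow `S` on the time horizon `T`) if
no point of `Γ` returns to `Γ` within time `(0, T]`. -/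
def nonrecurrent {X : Type*} (S : ℝ → X → X) (T : ℝ) (Γ : Set X) : Prop :=
  ∀ x ∈ Γ, ∀ t : ℝ, 0 < t → t ≤ T → S t x ∉ Γ

/-- `X_T`: the image of `Γ` under the flow over the time interval `[0, T]`. -/
def flowImage {X : Type*} (S : ℝ → X → X) (T : ℝ) (Γ : Set X) : Set X :=
  {x | ∃ s ∈ Set.Icc (0:ℝ) T, ∃ x₀ ∈ Γ, S s x₀ = x}

/-- `φ` is the eigenfunction generated by `(λ, g)`:
`φ(S(s, x₀)) = e^{λ s} g(x₀)` for all `x₀ ∈ Γ` and `s ∈ [0, T]`. -/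
def IsEigOn {X : Type*} (S : ℝ → X → X) (T : ℝ) (Γ : Set X) (lam : ℂ) (g : Γ → ℂ)
    (φ : X → ℂ) : Prop :=
  ∀ (x₀ : Γ) (s : ℝ), s ∈ Set.Icc (0:ℝ) T →
    φ (S s (x₀ : X)) = Complex.exp (lam * (s : ℂ)) * g x₀

lemma flow_unique {X : Type*} (S : ℝ → X → X) (hS0 : ∀ x, S 0 x = x)
    (hSadd : ∀ s t : ℝ, ∀ x, S (t + s) x = S t (S s x)) (T : ℝ) (Γ : Set X)
    (hΓ : nonrecurrent S T Γ) {s s' : ℝ} (hs : s ∈ Set.Icc (0:ℝ) T)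
    (hs' : s' ∈ Set.Icc (0:ℝ) T) {x₀ x₀' : X} (hx₀ : x₀ ∈ Γ) (hx₀' : x₀' ∈ Γ)
    (heq : S s x₀ = S s' x₀') : s = s' ∧ x₀ = x₀' := by
  have key : ∀ a b : ℝ, a ∈ Set.Icc (0:ℝ) T → b ∈ Set.Icc (0:ℝ) T →
      ∀ y y' : X, y ∈ Γ → y' ∈ Γ → S a y = S b y' → ¬ b < a := by
    intro a b ha hb y y' hy hy' he hlt
    have h1 : S (a - b) y = y' := by
      have e1 : S (-b + a) y = S (-b) (S a y) := hSadd a (-b) y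
      have e2 : S (-b) (S b y') = S (-b + b) y' := (hSadd b (-b) y').symm
      rw [he] at e1
      rw [e2] at e1
      simpa [hS0, neg_add_eq_sub] using e1
    exact hΓ y hy (a - b) (by linarith [hb.1]) (by linarith [ha.2, hb.1]) (h1 ▸ hy')
  have hss : s = s' := le_antisymm
    (not_lt.mp (key s s' hs hs' x₀ x₀' hx₀ hx₀' heq ∘ fun h => h))
    (not_lt.mp (key s' s hs' hs x₀' x₀ hx₀' hx₀ heq.symm ∘ fun h => h))
  subst hss
  refine ⟨rfl, ?_⟩
  have e1 : S (-s + s) x₀ = S (-s) (S s x₀) := hSadd s (-s) x₀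
  have e2 : S (-s + s) x₀' = S (-s) (S s x₀') := hSadd s (-s) x₀'
  rw [heq] at e1
  rw [← e2] at e1
  simpa [hS0, neg_add_eq_sub] using e1

lemma exists_eig {X : Type*} (S : ℝ → X → X) (hS0 : ∀ x, S 0 x = x)
    (hSadd : ∀ s t : ℝ, ∀ x, S (t + s) x = S t (S s x)) (T : ℝ) (Γ : Set X)
    (hΓ : nonrecurrent S T Γ) (lam : ℂ) (g : Γ → ℂ) :
    ∃ φ : X → ℂ, IsEigOn S T Γ lam g φ := by
  classical
  refine ⟨fun x => if hx : ∃ p : ℝ × Γ, p.1 ∈ Set.Icc (0:ℝ) T ∧ S p.1 (p.2 : X) = x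
      then Complex.exp (lam * (hx.choose.1 : ℂ)) * g hx.choose.2 else 0, ?_⟩
  intro x₀ s hs
  have hx : ∃ p : ℝ × Γ, p.1 ∈ Set.Icc (0:ℝ) T ∧ S p.1 (p.2 : X) = S s (x₀ : X) :=
    ⟨(s, x₀), hs, rfl⟩
  simp only [dif_pos hx]
  obtain ⟨h1, h2⟩ := hx.choose_spec
  obtain ⟨hse, hxe⟩ := flow_unique S hS0 hSadd T Γ hΓ h1 hs hx.choose.2.2 x₀.2 h2
  rw [hse, show hx.choose.2 = x₀ from Subtype.ext hxe]
theorem stmt6 {X : Type*} [MetricSpace X] (S : ℝ → X → X)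
    (hS0 : ∀ x, S 0 x = x)
    (hSadd : ∀ s t : ℝ, ∀ x, S (t + s) x = S t (S s x))
    (hScont : Continuous fun p : ℝ × X => S p.1 p.2)
    (T : ℝ) (hT : 0 < T) (Γ : Set X)
    (hΓcomp : IsCompact Γ) (hΓ : nonrecurrent S T Γ)
    (Λ : Set ℂ) (G : Set (Γ → ℂ))
    (hGcont : ∀ g ∈ G, Continuous g)
    -- the span of `G` is dense in `C(Γ; ℂ)` in the sup norm
    (hGdense : ∀ f : Γ → ℂ, Continuous f → ∀ ε : ℝ, 0 < ε →
      ∃ (N : ℕ) (c : Fin N → ℂ) (gs : Fin N → Γ → ℂ),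
        (∀ i, gs i ∈ G) ∧
        ∀ x : Γ, ‖f x - ∑ i, c i * gs i x‖ < ε)
    -- the span of the eigenfunctions generated by `(λ, g)`, `λ ∈ Λ`, `g ∈ C(Γ; ℂ)`,
    -- is dense in `C(X_T; ℂ)` in the sup norm
    (hfull : ∀ h : X → ℂ, ContinuousOn h (flowImage S T Γ) → ∀ ε : ℝ, 0 < ε →
      ∃ (N : ℕ) (lam : Fin N → ℂ) (c : Fin N → ℂ) (gs : Fin N → Γ → ℂ)
        (φ : Fin N → X → ℂ),
        (∀ i, lam i ∈ Λ) ∧ (∀ i, Continuous (gs i)) ∧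
        (∀ i, IsEigOn S T Γ (lam i) (gs i) (φ i)) ∧
        ∀ x ∈ flowImage S T Γ, ‖h x - ∑ i, c i * φ i x‖ < ε) :
    -- then the span of the eigenfunctions generated by `(λ, g)`, `λ ∈ Λ`, `g ∈ G`,
    -- is dense in `C(X_T; ℂ)` in the sup norm
    ∀ h : X → ℂ, ContinuousOn h (flowImage S T Γ) → ∀ ε : ℝ, 0 < ε →
      ∃ (N : ℕ) (lam : Fin N → ℂ) (c : Fin N → ℂ) (gs : Fin N → Γ → ℂ)
        (φ : Fin N → X → ℂ),
        (∀ i, lam i ∈ Λ) ∧ (∀ i, gs i ∈ G) ∧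
        (∀ i, IsEigOn S T Γ (lam i) (gs i) (φ i)) ∧
        ∀ x ∈ flowImage S T Γ, ‖h x - ∑ i, c i * φ i x‖ < ε := by
  classical
  intro h hcont ε hε
  obtain ⟨N, lam, c, gs, φ, hlamΛ, hgsC, hφeig, happrox⟩ :=
    hfull h hcont (ε / 2) (by linarith)
  set M : Fin N → ℝ := fun i => Real.exp (|(lam i).re| * T) with hMdef
  have hMpos : ∀ i, 0 < M i := fun i => Real.exp_pos _
  set δ : Fin N → ℝ :=
    fun i => ε / (2 * ((N : ℝ) + 1) * (‖c i‖ + 1) * M i) with hδdef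
  have hδpos : ∀ i, 0 < δ i := by
    intro i
    have := hMpos i
    have : (0:ℝ) < ‖c i‖ + 1 := by positivity
    apply div_pos hε
    positivity
  choose m d gg hggG hggapprox using
    fun i => hGdense (gs i) (hgsC i) (δ i) (hδpos i)
  choose ψ hψ using
    fun (i : Fin N) (j : Fin (m i)) => exists_eig S hS0 hSadd T Γ hΓ (lam i) (gg i j)
  let ι := Σ i : Fin N, Fin (m i)
  let e : ι ≃ Fin (Fintype.card ι) := Fintype.equivFin ι
  refine ⟨Fintype.card ι, fun k => lam (e.symm k).1,
    fun k => c (e.symm k).1 * d (e.symm k).1 (e.symm k).2,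
    fun k => gg (e.symm k).1 (e.symm k).2,
    fun k => ψ (e.symm k).1 (e.symm k).2,
    fun k => hlamΛ _, fun k => hggG _ _, fun k => hψ _ _, ?_⟩
  intro x hx
  obtain ⟨s, hs, x₀, hx₀, hSx⟩ := hx
  set y : Γ := ⟨x₀, hx₀⟩ with hy
  have hsum : ∑ k : Fin (Fintype.card ι),
      (c (e.symm k).1 * d (e.symm k).1 (e.symm k).2) * ψ (e.symm k).1 (e.symm k).2 x
      = ∑ i : Fin N, ∑ j : Fin (m i), (c i * d i j) * ψ i j x := by
    rw [Equiv.sum_comp e.symm (fun p : ι => (c p.1 * d p.1 p.2) * ψ p.1 p.2 x)]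
    exact Finset.sum_sigma _ _ _
  have hφval : ∀ i, φ i x = Complex.exp (lam i * (s : ℂ)) * gs i y := by
    intro i; rw [← hSx]; exact hφeig i y s hs
  have hψval : ∀ i j, ψ i j x = Complex.exp (lam i * (s : ℂ)) * gg i j y := by
    intro i j; rw [← hSx]; exact hψ i j y s hs
  have hEbound : ∀ i, ‖Complex.exp (lam i * (s : ℂ))‖ ≤ M i := by
    intro i
    rw [Complex.norm_exp]
    apply Real.exp_le_exp.2
    have hre : (lam i * (s : ℂ)).re = (lam i).re * s := by
      simp [Complex.mul_re]
    rw [hre]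
    calc (lam i).re * s ≤ |(lam i).re| * s :=
          mul_le_mul_of_nonneg_right (le_abs_self _) hs.1
      _ ≤ |(lam i).re| * T := mul_le_mul_of_nonneg_left hs.2 (abs_nonneg _)
  have hterm : ∀ i, ‖c i * φ i x - ∑ j, (c i * d i j) * ψ i j x‖
      ≤ ε / (2 * ((N : ℝ) + 1)) := by
    intro i
    have expand : ∑ j, (c i * d i j) * ψ i j x
        = c i * Complex.exp (lam i * (s : ℂ)) * ∑ j, d i j * gg i j y := by
      rw [Finset.mul_sum]
      apply Finset.sum_congr rfl
      intro j _
      rw [hψval i j]; ring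
    have heq : c i * φ i x - ∑ j, (c i * d i j) * ψ i j x
        = c i * (Complex.exp (lam i * (s : ℂ)) *
            (gs i y - ∑ j, d i j * gg i j y)) := by
      rw [hφval i, expand]; ring
    rw [heq, norm_mul, norm_mul]
    have h1 : ‖gs i y - ∑ j, d i j * gg i j y‖ ≤ δ i :=
      le_of_lt (hggapprox i y)
    have h2 : ‖Complex.exp (lam i * (s : ℂ))‖ *
        ‖gs i y - ∑ j, d i j * gg i j y‖ ≤ M i * δ i :=
      mul_le_mul (hEbound i) h1 (norm_nonneg _) (le_of_lt (hMpos i))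
    have h3 : ‖c i‖ * (M i * δ i) ≤ ε / (2 * ((N : ℝ) + 1)) := by
      have hMδ : M i * δ i = ε / (2 * ((N : ℝ) + 1) * (‖c i‖ + 1)) := by
        rw [hδdef]
        have := hMpos i
        have hc1 : (0:ℝ) < ‖c i‖ + 1 := by positivity
        field_simp
      rw [hMδ, mul_div_assoc', div_le_div_iff₀ (by positivity) (by positivity)]
      have hca : (0:ℝ) ≤ ‖c i‖ := norm_nonneg _
      have hN0 : (0:ℝ) ≤ (N : ℝ) := Nat.cast_nonneg _
      nlinarith [mul_nonneg hca hN0, mul_nonneg hca (le_of_lt hε)]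
    calc ‖c i‖ * (‖Complex.exp (lam i * (s : ℂ))‖ *
          ‖gs i y - ∑ j, d i j * gg i j y‖)
        ≤ ‖c i‖ * (M i * δ i) :=
          mul_le_mul_of_nonneg_left h2 (norm_nonneg _)
      _ ≤ ε / (2 * ((N : ℝ) + 1)) := h3
  have hsplit : h x - ∑ i : Fin N, ∑ j : Fin (m i), (c i * d i j) * ψ i j x
      = (h x - ∑ i, c i * φ i x)
        + ∑ i, (c i * φ i x - ∑ j, (c i * d i j) * ψ i j x) := by
    rw [Finset.sum_sub_distrib]
    ring
  have hfirst : ‖h x - ∑ i, c i * φ i x‖ < ε / 2 :=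
    happrox x ⟨s, hs, x₀, hx₀, hSx⟩
  have hsecond : ‖∑ i, (c i * φ i x - ∑ j, (c i * d i j) * ψ i j x)‖
      ≤ ε / 2 := by
    calc ‖∑ i, (c i * φ i x - ∑ j, (c i * d i j) * ψ i j x)‖
        ≤ ∑ i, ‖c i * φ i x - ∑ j, (c i * d i j) * ψ i j x‖ :=
          norm_sum_le _ _
      _ ≤ ∑ _i : Fin N, ε / (2 * ((N : ℝ) + 1)) :=
          Finset.sum_le_sum (fun i _ => hterm i)
      _ = (N : ℝ) * (ε / (2 * ((N : ℝ) + 1))) := by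
          rw [Finset.sum_const, Finset.card_univ, Fintype.card_fin, nsmul_eq_mul]
      _ ≤ ((N : ℝ) + 1) * (ε / (2 * ((N : ℝ) + 1))) :=
          mul_le_mul_of_nonneg_right (by linarith) (by positivity)
      _ = ε / 2 := by field_simp
  calc ‖h x - ∑ k : Fin (Fintype.card ι),
        (c (e.symm k).1 * d (e.symm k).1 (e.symm k).2) * ψ (e.symm k).1 (e.symm k).2 x‖
      = ‖(h x - ∑ i, c i * φ i x)
        + ∑ i, (c i * φ i x - ∑ j, (c i * d i j) * ψ i j x)‖ := by
        rw [hsum, hsplit]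
    _ ≤ ‖h x - ∑ i, c i * φ i x‖
        + ‖∑ i, (c i * φ i x - ∑ j, (c i * d i j) * ψ i j x)‖ :=
          norm_add_le _ _
    _ < ε / 2 + ε / 2 := add_lt_add_of_lt_of_le hfirst hsecond
    _ = ε := by ring
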